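/- Let n ≥ 2, let Ω ⊂ ℝⁿ be a nonempty bounded open set whose topological boundary ∂Ω has finite (n−1)-dimensional Hausdorff measure, and let β > 0. Let v : ℝⁿ → ℝ be Lipschitz and not identically zero on Ω. Then lim_{p→∞} [ ( ∫_Ω |Dv|^p dx + β^p ∫_{∂Ω} |v|^p dH^{n−1} ) / ∫_Ω |v|^p dx ]^{1/p} = max{ esssup_{x∈Ω} |Dv(x)|, β · esssup_{H^{n−1}⌊∂Ω} |v| } / sup_Ω |v|, where Dv denotes the derivative of v, which exists Lebesgue-almost everywhere by Rademacher's theorem, dx is Lebesgue measure, and H^{n−1}⌊∂Ω is the (n−1)-dimensional Hausdorff measure restricted to ∂Ω. -/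

import Mathlib

open Set MeasureTheory
open Filter

lemma aux_one_div_tendsto : Tendsto (fun p : ℝ => 1 / p) atTop (nhds 0) := by
  simpa [one_div] using tendsto_inv_atTop_zero

lemma aux_rpow_one_div_tendsto {T : ℝ} (hT : 0 < T) :
    Tendsto (fun p : ℝ => T ^ (1 / p)) atTop (nhds 1) := by
  have h : Tendsto (fun p : ℝ => Real.exp (Real.log T * (1 / p))) atTop (nhds 1) := by
    have h2 : Tendsto (fun p : ℝ => Real.log T * (1 / p)) atTop (nhds 0) := by
      simpa using aux_one_div_tendsto.const_mul (Real.log T)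
    simpa [Function.comp_def] using (Real.continuous_exp.tendsto 0).comp h2
  exact h.congr fun p => (Real.rpow_def_of_pos hT _).symm

lemma aux_core {α : Type*} [MeasurableSpace α] (μ : Measure α) [IsFiniteMeasure μ]
    (f : α → ℝ) (hf : Measurable f) (h0 : ∀ x, 0 ≤ f x) {C : ℝ}
    (hC : ∀ᵐ x ∂μ, f x ≤ C) :
    Tendsto (fun p : ℝ => (∫ x, f x ^ p ∂μ) ^ (1 / p)) atTop
      (nhds (essSup f μ)) := by
  rcases eq_or_ne μ 0 with rfl | hμ
  · have h1 : essSup f (0 : Measure α) = 0 := by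
      rw [essSup_eq_sInf]
      simp only [Measure.coe_zero, Pi.zero_apply, setOf_true]
      refine Real.sInf_of_not_bddBelow ?_
      rintro ⟨b, hb⟩
      have := hb (Set.mem_univ (b - 1))
      change b ≤ b - 1 at this
      linarith
    rw [h1]
    have : ∀ᶠ p : ℝ in atTop, (0:ℝ) = (∫ x, f x ^ p ∂(0:Measure α)) ^ (1 / p) := by
      filter_upwards [eventually_ge_atTop 1] with p hp
      rw [integral_zero_measure, Real.zero_rpow (by positivity)]
    exact tendsto_const_nhds.congr' this
  · haveI := ae_neBot.mpr hμ
    have hbdd : IsBoundedUnder (· ≤ ·) (ae μ) f := ⟨C, eventually_map.mpr hC⟩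
    have hM0 : 0 ≤ essSup f μ :=
      le_limsup_of_frequently_le ((ae_of_all μ h0).frequently) hbdd
    have hint : ∀ p : ℝ, 0 ≤ p → Integrable (fun x => f x ^ p) μ := by
      intro p hp
      refine (integrable_const ((max C 0) ^ p)).mono'
        (((Real.continuous_rpow_const hp).measurable.comp hf).aestronglyMeasurable) ?_
      filter_upwards [hC] with x hx
      rw [Real.norm_of_nonneg (Real.rpow_nonneg (h0 x) _)]
      exact Real.rpow_le_rpow (h0 x) (hx.trans (le_max_left _ _)) hp
    have hInonneg : ∀ p : ℝ, 0 ≤ ∫ x, f x ^ p ∂μ :=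
      fun p => integral_nonneg fun x => Real.rpow_nonneg (h0 x) _
    have hT : 0 < (μ univ).toReal :=
      ENNReal.toReal_pos (Measure.measure_univ_ne_zero.mpr hμ) (measure_ne_top μ univ)
    refine tendsto_order.2 ⟨?_, ?_⟩
    · intro a ha
      rcases lt_or_ge a 0 with ha0 | ha0
      · exact Eventually.of_forall fun p => ha0.trans_le (Real.rpow_nonneg (hInonneg p) _)
      · set c := (a + essSup f μ) / 2 with hc
        have hac : a < c := by rw [hc]; linarith
        have hcM : c < essSup f μ := by rw [hc]; linarith
        have hc0 : 0 < c := ha0.trans_lt hac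
        set A := {x | c < f x} with hA'
        have hA : MeasurableSet A := measurableSet_lt measurable_const hf
        have hmA : μ A ≠ 0 := by
          intro h
          have h2 : f ≤ᵐ[μ] fun _ => c := by
            rw [EventuallyLE, ae_iff]
            convert h using 2
            ext x; simp [hA', not_le]
          have hcob : IsCoboundedUnder (· ≤ ·) (ae μ) f :=
            isCoboundedUnder_le_of_le (ae μ) h0
          exact absurd (limsup_le_of_le hcob h2) (not_le.mpr hcM)
        have hmA' : 0 < (μ A).toReal := ENNReal.toReal_pos hmA (measure_ne_top μ A)
        have key : ∀ p : ℝ, 1 ≤ p →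
            c * (μ A).toReal ^ (1/p) ≤ (∫ x, f x ^ p ∂μ) ^ (1/p) := by
          intro p hp
          have hp0 : (0:ℝ) ≤ p := by linarith
          have hp0' : p ≠ 0 := by positivity
          have h1 : c ^ p * (μ A).toReal ≤ ∫ x in A, f x ^ p ∂μ := by
            have := setIntegral_ge_of_const_le hA (measure_ne_top μ A)
              (fun x hx => Real.rpow_le_rpow hc0.le (le_of_lt hx) hp0)
              ((hint p hp0).integrableOn)
            rwa [smul_eq_mul, mul_comm, measureReal_def] at this
          have h2 : ∫ x in A, f x ^ p ∂μ ≤ ∫ x, f x ^ p ∂μ :=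
            setIntegral_le_integral (hint p hp0)
              (ae_of_all μ fun x => Real.rpow_nonneg (h0 x) _)
          have h3 : (c ^ p * (μ A).toReal) ^ (1/p) = c * (μ A).toReal ^ (1/p) := by
            rw [Real.mul_rpow (by positivity) ENNReal.toReal_nonneg,
              ← Real.rpow_mul hc0.le, mul_one_div_cancel hp0', Real.rpow_one]
          calc c * (μ A).toReal ^ (1/p) = (c ^ p * (μ A).toReal) ^ (1/p) := h3.symm
            _ ≤ _ := Real.rpow_le_rpow (by positivity) (h1.trans h2) (by positivity)
        have hlim : Tendsto (fun p : ℝ => c * (μ A).toReal ^ (1/p)) atTop (nhds c) := by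
          simpa using (aux_rpow_one_div_tendsto hmA').const_mul c
        filter_upwards [hlim.eventually (eventually_gt_nhds hac), eventually_ge_atTop 1]
          with p h1 h2
        exact h1.trans_le (key p h2)
    · intro b hb
      set c := (essSup f μ + b) / 2 with hc
      have hMc : essSup f μ < c := by rw [hc]; linarith
      have hcb : c < b := by rw [hc]; linarith
      have hc0 : 0 < c := hM0.trans_lt hMc
      have hae : ∀ᵐ x ∂μ, f x < c := ae_lt_of_essSup_lt hMc hbdd
      have key : ∀ p : ℝ, 1 ≤ p →
          (∫ x, f x ^ p ∂μ) ^ (1/p) ≤ c * (μ univ).toReal ^ (1/p) := by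
        intro p hp
        have hp0 : (0:ℝ) ≤ p := by linarith
        have hp0' : p ≠ 0 := by positivity
        have h1 : ∫ x, f x ^ p ∂μ ≤ ∫ _x, c ^ p ∂μ := by
          refine integral_mono_ae (hint p hp0) (integrable_const _) ?_
          filter_upwards [hae] with x hx
          exact Real.rpow_le_rpow (h0 x) hx.le hp0
        have h2 : ∫ _x, (c:ℝ) ^ p ∂μ = c ^ p * (μ univ).toReal := by
          rw [integral_const, smul_eq_mul, mul_comm, measureReal_def]
        have h3 : (c ^ p * (μ univ).toReal) ^ (1/p) = c * (μ univ).toReal ^ (1/p) := by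
          rw [Real.mul_rpow (by positivity) ENNReal.toReal_nonneg,
            ← Real.rpow_mul hc0.le, mul_one_div_cancel hp0', Real.rpow_one]
        calc (∫ x, f x ^ p ∂μ) ^ (1/p)
            ≤ (c ^ p * (μ univ).toReal) ^ (1/p) :=
              Real.rpow_le_rpow (hInonneg p) (h2 ▸ h1) (by positivity)
          _ = c * (μ univ).toReal ^ (1/p) := h3
      have hlim : Tendsto (fun p : ℝ => c * (μ univ).toReal ^ (1/p)) atTop (nhds c) := by
        simpa using (aux_rpow_one_div_tendsto hT).const_mul c
      filter_upwards [hlim.eventually (eventually_lt_nhds hcb), eventually_ge_atTop 1]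
        with p h1 h2
      exact (key p h2).trans_lt h1

lemma aux_sum_max {F G : ℝ → ℝ} {a b : ℝ}
    (hF0 : ∀ᶠ p in atTop, 0 ≤ F p) (hG0 : ∀ᶠ p in atTop, 0 ≤ G p)
    (hF : Tendsto (fun p => F p ^ (1/p)) atTop (nhds a))
    (hG : Tendsto (fun p => G p ^ (1/p)) atTop (nhds b)) :
    Tendsto (fun p => (F p + G p) ^ (1/p)) atTop (nhds (max a b)) := by
  have hH : Tendsto (fun p => max (F p ^ (1/p)) (G p ^ (1/p))) atTop (nhds (max a b)) :=
    hF.max hG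
  have h2 : Tendsto (fun p => (2:ℝ) ^ (1/p) * max (F p ^ (1/p)) (G p ^ (1/p)))
      atTop (nhds (max a b)) := by
    simpa using (aux_rpow_one_div_tendsto (by norm_num : (0:ℝ) < 2)).mul hH
  refine tendsto_of_tendsto_of_tendsto_of_le_of_le' hH h2 ?_ ?_
  · filter_upwards [hF0, hG0, eventually_gt_atTop 0] with p hf hg hp
    have hp0 : (0:ℝ) ≤ 1/p := by positivity
    exact max_le (Real.rpow_le_rpow hf (le_add_of_nonneg_right hg) hp0)
      (Real.rpow_le_rpow hg (le_add_of_nonneg_left hf) hp0)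
  · filter_upwards [hF0, hG0, eventually_gt_atTop 0] with p hf hg hp
    have hp0 : (0:ℝ) ≤ 1/p := by positivity
    have h3 : F p + G p ≤ 2 * max (F p) (G p) := by
      rw [two_mul]; exact add_le_add (le_max_left _ _) (le_max_right _ _)
    calc (F p + G p) ^ (1/p) ≤ (2 * max (F p) (G p)) ^ (1/p) :=
          Real.rpow_le_rpow (by positivity) h3 hp0
      _ = 2 ^ (1/p) * (max (F p) (G p)) ^ (1/p) :=
          Real.mul_rpow (by norm_num) (le_max_of_le_left hf)
      _ ≤ 2 ^ (1/p) * max (F p ^ (1/p)) (G p ^ (1/p)) := by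
          have : (max (F p) (G p)) ^ (1/p) = max (F p ^ (1/p)) (G p ^ (1/p)) := by
            rcases le_total (F p) (G p) with h | h
            · rw [max_eq_right h, max_eq_right (Real.rpow_le_rpow hf h hp0)]
            · rw [max_eq_left h, max_eq_left (Real.rpow_le_rpow hg h hp0)]
          rw [this]

lemma aux_essSup_eq_sSup {n : ℕ} (Ω : Set (EuclideanSpace ℝ (Fin n)))
    (hne : Ω.Nonempty) (ho : IsOpen Ω)
    (g : EuclideanSpace ℝ (Fin n) → ℝ) (hg : Continuous g) (h0 : ∀ x, 0 ≤ g x)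
    {K : ℝ} (hK : ∀ x ∈ Ω, g x ≤ K) :
    essSup g (MeasureTheory.volume.restrict Ω) = sSup (g '' Ω) := by
  set μ₁ := MeasureTheory.volume.restrict Ω with hμ₁
  have hμ1 : μ₁ ≠ 0 := by
    intro h
    have h2 : μ₁ univ = MeasureTheory.volume Ω := Measure.restrict_apply_univ Ω
    rw [h] at h2
    exact absurd h2.symm (ho.measure_pos MeasureTheory.volume hne).ne'
  haveI := ae_neBot.mpr hμ1
  have him_ne : (g '' Ω).Nonempty := hne.image g
  have him_bdd : BddAbove (g '' Ω) := ⟨K, by rintro _ ⟨z, hz, rfl⟩; exact hK z hz⟩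
  have hbdd : IsBoundedUnder (· ≤ ·) (ae μ₁) g := by
    refine ⟨K, eventually_map.mpr ?_⟩
    filter_upwards [ae_restrict_mem ho.measurableSet] with x hx
    exact hK x hx
  have hle : essSup g μ₁ ≤ sSup (g '' Ω) := by
    refine limsup_le_of_le (isCoboundedUnder_le_of_le _ h0) ?_
    filter_upwards [ae_restrict_mem ho.measurableSet] with x hx
    exact le_csSup him_bdd ⟨x, hx, rfl⟩
  refine le_antisymm hle (le_of_not_gt fun hlt => ?_)
  obtain ⟨c, hc1, hc2⟩ := exists_between hlt
  obtain ⟨y, ⟨x, hxΩ, rfl⟩, hcy⟩ := exists_lt_of_lt_csSup him_ne hc2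
  set U := Ω ∩ g ⁻¹' (Ioi c) with hU
  have hUopen : IsOpen U := ho.inter (isOpen_Ioi.preimage hg)
  have hUne : U.Nonempty := ⟨x, hxΩ, hcy⟩
  have hae : ∀ᵐ z ∂μ₁, g z < c := ae_lt_of_essSup_lt hc1 hbdd
  rw [ae_iff] at hae
  have hsub : U ⊆ {z | ¬ g z < c} := fun z hz => not_lt.mpr (le_of_lt hz.2)
  have h3 : μ₁ U = 0 := measure_mono_null hsub hae
  have h4 : MeasureTheory.volume U = 0 := by
    rw [hμ₁, Measure.restrict_apply hUopen.measurableSet,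
      Set.inter_eq_self_of_subset_left Set.inter_subset_left] at h3
    exact h3
  exact absurd h4 (hUopen.measure_pos MeasureTheory.volume hUne).ne'

theorem tendsto_rayleigh_quotient_rpow
    {n : ℕ} (hn : 2 ≤ n) (Ω : Set (EuclideanSpace ℝ (Fin n)))
    (hne : Ω.Nonempty) (ho : IsOpen Ω) (hb : Bornology.IsBounded Ω)
    (hfr : μH[(n : ℝ) - 1] (frontier Ω) < ⊤)
    (β : ℝ) (hβ : 0 < β)
    (v : EuclideanSpace ℝ (Fin n) → ℝ) (L : NNReal) (hv : LipschitzWith L v)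
    (hvne : ∃ x ∈ Ω, v x ≠ 0) :
    Filter.Tendsto (fun p : ℝ =>
      (((∫ x in Ω, ‖fderiv ℝ v x‖ ^ p) +
          β ^ p * ∫ y in frontier Ω, |v y| ^ p ∂μH[(n : ℝ) - 1]) /
        ∫ x in Ω, |v x| ^ p) ^ (1 / p)) Filter.atTop
      (nhds (max (essSup (fun x => ‖fderiv ℝ v x‖) (MeasureTheory.volume.restrict Ω))
          (β * essSup (fun y => |v y|) ((μH[(n : ℝ) - 1]).restrict (frontier Ω))) /
        sSup ((fun x => |v x|) '' Ω))) := by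
  obtain ⟨x₀, hx₀⟩ := hne
  have hvol : MeasureTheory.volume Ω < ⊤ := hb.measure_lt_top
  haveI hfin1 : IsFiniteMeasure (MeasureTheory.volume.restrict Ω) :=
    ⟨by rwa [Measure.restrict_apply_univ]⟩
  haveI hfin2 : IsFiniteMeasure ((μH[(n : ℝ) - 1]).restrict (frontier Ω)) :=
    ⟨by rwa [Measure.restrict_apply_univ]⟩
  obtain ⟨R, hR⟩ := hb.closure.subset_closedBall x₀
  set K := |v x₀| + L * max R 0 with hKdef
  have hKcl : ∀ y ∈ closure Ω, |v y| ≤ K := by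
    intro y hy
    have h1 : dist (v y) (v x₀) ≤ L * dist y x₀ := hv.dist_le_mul y x₀
    have h2 : dist y x₀ ≤ R := by simpa [Metric.mem_closedBall] using hR hy
    have h3 : |v y| - |v x₀| ≤ |v y - v x₀| := abs_sub_abs_le_abs_sub _ _
    have h4 : (L:ℝ) * dist y x₀ ≤ L * max R 0 :=
      mul_le_mul_of_nonneg_left (h2.trans (le_max_left _ _)) L.coe_nonneg
    rw [Real.dist_eq] at h1
    rw [hKdef]; linarith
  have hm1 : Measurable fun x => ‖fderiv ℝ v x‖ := (measurable_fderiv ℝ v).norm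
  have hm2 : Measurable fun x => |v x| := hv.continuous.abs.measurable
  have h01 : ∀ x : EuclideanSpace ℝ (Fin n), 0 ≤ ‖fderiv ℝ v x‖ := fun x => norm_nonneg _
  have h02 : ∀ x : EuclideanSpace ℝ (Fin n), 0 ≤ |v x| := fun x => abs_nonneg _
  have hA := aux_core (MeasureTheory.volume.restrict Ω) _ hm1 h01
    (C := (L:ℝ)) (ae_of_all _ fun x => norm_fderiv_le_of_lipschitz ℝ hv)
  have hBae : ∀ᵐ y ∂((μH[(n : ℝ) - 1]).restrict (frontier Ω)), |v y| ≤ K := by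
    filter_upwards [ae_restrict_mem isClosed_frontier.measurableSet] with y hy
    exact hKcl y (frontier_subset_closure hy)
  have hB := aux_core ((μH[(n : ℝ) - 1]).restrict (frontier Ω)) _ hm2 h02 hBae
  have hDae : ∀ᵐ x ∂(MeasureTheory.volume.restrict Ω), |v x| ≤ K := by
    filter_upwards [ae_restrict_mem ho.measurableSet] with x hx
    exact hKcl x (subset_closure hx)
  have hD := aux_core (MeasureTheory.volume.restrict Ω) _ hm2 h02 hDae
  have hG : Filter.Tendsto
      (fun p : ℝ => (β ^ p * ∫ y in frontier Ω, |v y| ^ p ∂μH[(n : ℝ) - 1]) ^ (1/p))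
      Filter.atTop
      (nhds (β * essSup (fun y => |v y|) ((μH[(n : ℝ) - 1]).restrict (frontier Ω)))) := by
    refine (hB.const_mul β).congr' ?_
    filter_upwards [Filter.eventually_gt_atTop 0] with p hp
    have hI : 0 ≤ ∫ y in frontier Ω, |v y| ^ p ∂μH[(n : ℝ) - 1] :=
      integral_nonneg fun y => Real.rpow_nonneg (abs_nonneg _) _
    rw [Real.mul_rpow (Real.rpow_nonneg hβ.le _) hI, ← Real.rpow_mul hβ.le,
      mul_one_div_cancel hp.ne', Real.rpow_one]
  have hNum := aux_sum_max (F := fun p : ℝ => ∫ x in Ω, ‖fderiv ℝ v x‖ ^ p)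
    (G := fun p : ℝ => β ^ p * ∫ y in frontier Ω, |v y| ^ p ∂μH[(n : ℝ) - 1])
    (Filter.Eventually.of_forall fun p =>
      integral_nonneg fun x => Real.rpow_nonneg (norm_nonneg _) _)
    (Filter.Eventually.of_forall fun p => mul_nonneg (Real.rpow_nonneg hβ.le _)
      (integral_nonneg fun y => Real.rpow_nonneg (abs_nonneg _) _))
    hA hG
  have hS := aux_essSup_eq_sSup Ω ⟨x₀, hx₀⟩ ho _ hv.continuous.abs h02
    (fun x hx => hKcl x (subset_closure hx))
  have hSpos : 0 < sSup ((fun x => |v x|) '' Ω) := by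
    obtain ⟨x, hx, hvx⟩ := hvne
    have him : BddAbove ((fun x => |v x|) '' Ω) :=
      ⟨K, by rintro _ ⟨z, hz, rfl⟩; exact hKcl z (subset_closure hz)⟩
    exact lt_of_lt_of_le (abs_pos.mpr hvx) (le_csSup him ⟨x, hx, rfl⟩)
  rw [hS] at hD
  have hfinal := hNum.div hD hSpos.ne'
  refine hfinal.congr' ?_
  filter_upwards [Filter.eventually_gt_atTop 0] with p hp
  have hN0 : 0 ≤ (∫ x in Ω, ‖fderiv ℝ v x‖ ^ p) +
      β ^ p * ∫ y in frontier Ω, |v y| ^ p ∂μH[(n : ℝ) - 1] :=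
    add_nonneg (integral_nonneg fun x => Real.rpow_nonneg (norm_nonneg _) _)
      (mul_nonneg (Real.rpow_nonneg hβ.le _)
        (integral_nonneg fun y => Real.rpow_nonneg (abs_nonneg _) _))
  have hD0 : 0 ≤ ∫ x in Ω, |v x| ^ p :=
    integral_nonneg fun x => Real.rpow_nonneg (abs_nonneg _) _
  rw [Real.div_rpow hN0 hD0]
  rfl
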